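/- Let n ≥ 1 and let Λ be the exterior algebra over ℚ on generators α₁, β₁, …, α_{2n}, β_{2n}, with P_i := α_i ∧ β_i and D_{rs} := α_r ∧ β_s − β_r ∧ α_s. The family of elements P_{i₁} ∧ ⋯ ∧ P_{i_p} ∧ D_{j₁k₁} ∧ ⋯ ∧ D_{j_qk_q} ∈ Λ, indexed by all data with p + q = n, the indices i₁ < ⋯ < i_p, j₁, …, j_q, k₁, …, k_q pairwise distinct elements of {1, …, 2n}, and satisfying the Gelfand–Zetlin condition j₁ < j₂ < ⋯ < j_q, k₁ < k₂ < ⋯ < k_q, and j_r < k_r for all r = 1, …, q, is linearly independent over ℚ. -/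

import Mathlib

/-- The generator `α_i` (for `i` in `{1, …, 2n}`) of the exterior algebra over `ℚ` on the
free module with basis `α₁, β₁, …, α_{2n}, β_{2n}`: the image under `ι` of the `i`-th
standard basis vector of `Fin (4n) → ℚ`. -/
noncomputable def egAlpha (n : ℕ) (i : Fin (2 * n)) :
    ExteriorAlgebra ℚ (Fin (4 * n) → ℚ) :=
  ExteriorAlgebra.ι ℚ (Pi.single (Fin.castLE (by omega) i) 1)

/-- The generator `β_i`: the image under `ι` of the `(2n + i)`-th standard basis vector. -/
noncomputable def egBeta (n : ℕ) (i : Fin (2 * n)) :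
    ExteriorAlgebra ℚ (Fin (4 * n) → ℚ) :=
  ExteriorAlgebra.ι ℚ (Pi.single (⟨2 * n + i.val, by have := i.isLt; omega⟩ : Fin (4 * n)) 1)

/-- The class `P_i := α_i ∧ β_i` of the divisor `P_i = {x_i = 0}` on `E^{2n}`. -/
noncomputable def egP (n : ℕ) (i : Fin (2 * n)) : ExteriorAlgebra ℚ (Fin (4 * n) → ℚ) :=
  egAlpha n i * egBeta n i

/-- The class `D_{ij} := α_i ∧ β_j − β_i ∧ α_j` of the divisor `D_{ij} = P_i + P_j − Δ_{ij}`. -/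
noncomputable def egD (n : ℕ) (i j : Fin (2 * n)) : ExteriorAlgebra ℚ (Fin (4 * n) → ℚ) :=
  egAlpha n i * egBeta n j - egBeta n i * egAlpha n j


/-- Index data for a Gelfand–Zetlin monomial
`P_{i₁} ∧ ⋯ ∧ P_{i_p} ∧ D_{j₁k₁} ∧ ⋯ ∧ D_{j_qk_q}` with `p + q = n`: the indices
`i₁ < ⋯ < i_p, j₁, …, j_q, k₁, …, k_q` are pairwise distinct elements of `{1, …, 2n}` and
satisfy the Gelfand–Zetlin condition `j₁ < ⋯ < j_q`, `k₁ < ⋯ < k_q`, `j_r < k_r`. -/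
structure GZIndex (n : ℕ) where
  p : ℕ
  q : ℕ
  hpq : p + q = n
  i : Fin p → Fin (2 * n)
  j : Fin q → Fin (2 * n)
  k : Fin q → Fin (2 * n)
  imono : StrictMono i
  jmono : StrictMono j
  kmono : StrictMono k
  hjk : ∀ r, j r < k r
  hdistinct : Function.Injective (Sum.elim i (Sum.elim j k))

/-- The Gelfand–Zetlin monomial `P_{i₁} ∧ ⋯ ∧ P_{i_p} ∧ D_{j₁k₁} ∧ ⋯ ∧ D_{j_qk_q}`
attached to the index data `idx`. -/
noncomputable def gzMonomial (n : ℕ) (idx : GZIndex n) :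
    ExteriorAlgebra ℚ (Fin (4 * n) → ℚ) :=
  (List.ofFn fun r : Fin idx.p => egP n (idx.i r)).prod *
    (List.ofFn fun r : Fin idx.q => egD n (idx.j r) (idx.k r)).prod

namespace GZAux

open ExteriorAlgebra

variable (n : ℕ)

def ai (x : Fin (2 * n)) : Fin (4 * n) := Fin.castLE (by omega) x

def bi (x : Fin (2 * n)) : Fin (4 * n) := ⟨2 * n + x.val, by have := x.isLt; omega⟩

def toVec (a : Fin (4 * n) × Bool) : Fin (4 * n) → ℚ :=
  cond a.2 (-(Pi.single a.1 1)) (Pi.single a.1 1)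

def atomsP (x : Fin (2 * n)) : List (Fin (4 * n) × Bool) := [(ai n x, false), (bi n x, false)]

def atomsD (x y : Fin (2 * n)) (b : Bool) : List (Fin (4 * n) × Bool) :=
  cond b [(bi n x, true), (ai n y, false)] [(ai n x, false), (bi n y, false)]

def aList (idx : GZIndex n) (ε : Fin idx.q → Bool) : List (Fin (4 * n) × Bool) :=
  (List.ofFn fun r => atomsP n (idx.i r)).flatten ++
  (List.ofFn fun r => atomsD n (idx.j r) (idx.k r) (ε r)).flatten

lemma egP_eq (x : Fin (2 * n)) :
    egP n x = (((atomsP n x).map (toVec n)).map (ι ℚ)).prod := by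
  simp [egP, egAlpha, egBeta, atomsP, toVec, ai, bi]

lemma egD_eq (x y : Fin (2 * n)) :
    egD n x y = (((atomsD n x y false).map (toVec n)).map (ι ℚ)).prod +
      (((atomsD n x y true).map (toVec n)).map (ι ℚ)).prod := by
  simp [egD, egAlpha, egBeta, atomsD, toVec, ai, bi, sub_eq_add_neg, neg_mul]

lemma prod_ofFn_add {A : Type*} [Ring A] :
    ∀ (q : ℕ) (x y : Fin q → A),
      (List.ofFn fun r => x r + y r).prod =
        ∑ ε : Fin q → Bool, (List.ofFn fun r => cond (ε r) (y r) (x r)).prod := by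
  intro q
  induction q with
  | zero =>
    intro x y
    simp
  | succ q ih =>
    intro x y
    rw [List.ofFn_succ, List.prod_cons, ih (fun r => x r.succ) (fun r => y r.succ), add_mul,
      ← Equiv.sum_comp (Fin.consEquiv fun _ : Fin (q+1) => Bool)
        (fun ε : Fin (q+1) → Bool => (List.ofFn fun r => cond (ε r) (y r) (x r)).prod),
      Fintype.sum_prod_type, Fintype.sum_bool]
    simp only [Fin.consEquiv, Equiv.coe_fn_mk, List.ofFn_succ, Fin.cons_zero, Fin.cons_succ,
      List.prod_cons, cond_true, cond_false, ← Finset.mul_sum]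
    rw [add_comm]


lemma flatten_map_prod {A : Type*} [Monoid A] {q : ℕ} (f : Fin q → List (Fin (4 * n) × Bool))
    (g : Fin (4 * n) × Bool → A) :
    (((List.ofFn f).flatten).map g).prod = (List.ofFn fun r => ((f r).map g).prod).prod := by
  rw [List.map_flatten, List.prod_flatten, List.map_ofFn, List.map_ofFn]
  rfl

lemma gz_expand (idx : GZIndex n) :
    gzMonomial n idx =
      ∑ ε : Fin idx.q → Bool, ((aList n idx ε).map (⇑(ι ℚ) ∘ toVec n)).prod := by
  have hP : ∀ x, egP n x = ((atomsP n x).map (⇑(ι ℚ) ∘ toVec n)).prod := fun x => by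
    rw [egP_eq, List.map_map]
  have hD' : ∀ x y, egD n x y =
      ((atomsD n x y false).map (⇑(ι ℚ) ∘ toVec n)).prod +
      ((atomsD n x y true).map (⇑(ι ℚ) ∘ toVec n)).prod := fun x y => by
    rw [egD_eq, List.map_map, List.map_map]
  rw [gzMonomial]
  simp only [hD']
  rw [prod_ofFn_add, Finset.mul_sum]
  apply Finset.sum_congr rfl
  intro ε _
  rw [aList, List.map_append, List.prod_append, flatten_map_prod, flatten_map_prod]
  congr 1
  · simp only [hP]
  · have h2 : ∀ r, cond (ε r) (((atomsD n (idx.j r) (idx.k r) true).map (⇑(ι ℚ) ∘ toVec n)).prod)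
        (((atomsD n (idx.j r) (idx.k r) false).map (⇑(ι ℚ) ∘ toVec n)).prod)
        = ((atomsD n (idx.j r) (idx.k r) (ε r)).map (⇑(ι ℚ) ∘ toVec n)).prod := fun r => by
      cases ε r <;> rfl
    simp only [h2]

noncomputable def detF (T : Fin (2 * n) → Fin (4 * n)) :
    (Fin (4 * n) → ℚ) [⋀^Fin (2 * n)]→ₗ[ℚ] ℚ :=
  Matrix.detRowAlternating.compLinearMap (LinearMap.funLeft ℚ ℚ T)

noncomputable def fam (T : Fin (2 * n) → Fin (4 * n)) :
    ∀ m : ℕ, (Fin (4 * n) → ℚ) [⋀^Fin m]→ₗ[ℚ] ℚ :=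
  fun m => if h : m = 2 * n then (detF n T).domDomCongr (finCongr h.symm) else 0

noncomputable def lam (T : Fin (2 * n) → Fin (4 * n)) :
    ExteriorAlgebra ℚ (Fin (4 * n) → ℚ) →ₗ[ℚ] ℚ :=
  liftAlternating (fam n T)

lemma lam_ιMulti (T : Fin (2 * n) → Fin (4 * n)) (v : Fin (2 * n) → (Fin (4 * n) → ℚ)) :
    lam n T (ιMulti ℚ (2 * n) v) = (Matrix.of fun r c => v r (T c)).det := by
  rw [lam, liftAlternating_apply_ιMulti, fam, dif_pos rfl, finCongr_refl,
    AlternatingMap.domDomCongr_refl, detF]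
  rfl

lemma lam_list (T : Fin (2 * n) → Fin (4 * n)) (l : List (Fin (4 * n) → ℚ))
    (hl : l.length = 2 * n) :
    lam n T ((l.map (ι ℚ)).prod) =
      (Matrix.of fun r c => (l.get (Fin.cast hl.symm r)) (T c)).det := by
  have h0 : l.map (ι ℚ) = List.ofFn (fun r : Fin (2 * n) => ι ℚ (l.get (Fin.cast hl.symm r))) := by
    apply List.ext_getElem
    · simp [hl]
    · intro m h1 h2
      simp [Fin.cast]
  rw [h0, ← ExteriorAlgebra.ιMulti_apply, lam_ιMulti]


/-! ### Index sets -/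

def cA (idx : GZIndex n) (ε : Fin idx.q → Bool) (r : Fin idx.q) : Fin (2 * n) :=
  cond (ε r) (idx.k r) (idx.j r)

def cB (idx : GZIndex n) (ε : Fin idx.q → Bool) (r : Fin idx.q) : Fin (2 * n) :=
  cond (ε r) (idx.j r) (idx.k r)

def ASet (idx : GZIndex n) (ε : Fin idx.q → Bool) : Finset (Fin (2 * n)) :=
  Finset.univ.image idx.i ∪ Finset.univ.image (cA n idx ε)

def BSet (idx : GZIndex n) (ε : Fin idx.q → Bool) : Finset (Fin (2 * n)) :=
  Finset.univ.image idx.i ∪ Finset.univ.image (cB n idx ε)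

def SSet (idx : GZIndex n) (ε : Fin idx.q → Bool) : Finset (Fin (4 * n)) :=
  (ASet n idx ε).image (ai n) ∪ (BSet n idx ε).image (bi n)

lemma ai_inj : Function.Injective (ai n) := by
  intro x y h
  have := congrArg Fin.val h
  exact Fin.ext this

lemma bi_inj : Function.Injective (bi n) := by
  intro x y h
  have : 2 * n + (x : ℕ) = 2 * n + y := congrArg Fin.val h
  exact Fin.ext (by omega)

lemma ai_ne_bi (x y : Fin (2 * n)) : ai n x ≠ bi n y := by
  intro h
  have : (x : ℕ) = 2 * n + y := congrArg Fin.val h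
  have := x.isLt
  omega

variable {n}

lemma i_ne_j (idx : GZIndex n) (r : Fin idx.p) (s : Fin idx.q) : idx.i r ≠ idx.j s := by
  intro h
  have := idx.hdistinct (a₁ := Sum.inl r) (a₂ := Sum.inr (Sum.inl s)) h
  simp at this

lemma i_ne_k (idx : GZIndex n) (r : Fin idx.p) (s : Fin idx.q) : idx.i r ≠ idx.k s := by
  intro h
  have := idx.hdistinct (a₁ := Sum.inl r) (a₂ := Sum.inr (Sum.inr s)) h
  simp at this

lemma j_ne_k (idx : GZIndex n) (r s : Fin idx.q) : idx.j r ≠ idx.k s := by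
  intro h
  have := idx.hdistinct (a₁ := Sum.inr (Sum.inl r)) (a₂ := Sum.inr (Sum.inr s)) h
  simp at this

lemma i_ne_cA (idx : GZIndex n) (ε : Fin idx.q → Bool) (r : Fin idx.p) (s : Fin idx.q) :
    idx.i r ≠ cA n idx ε s := by
  unfold cA; cases ε s
  · exact i_ne_j idx r s
  · exact i_ne_k idx r s

lemma i_ne_cB (idx : GZIndex n) (ε : Fin idx.q → Bool) (r : Fin idx.p) (s : Fin idx.q) :
    idx.i r ≠ cB n idx ε s := by
  unfold cB; cases ε s
  · exact i_ne_k idx r s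
  · exact i_ne_j idx r s

lemma cA_ne_cB (idx : GZIndex n) (ε : Fin idx.q → Bool) (r s : Fin idx.q) :
    cA n idx ε r ≠ cB n idx ε s := by
  unfold cA cB
  rcases eq_or_ne r s with rfl | hrs
  · cases ε r
    · exact j_ne_k idx r r
    · exact Ne.symm (j_ne_k idx r r)
  · cases ε r <;> cases ε s
    · exact j_ne_k idx r s
    · exact idx.jmono.injective.ne hrs
    · exact idx.kmono.injective.ne hrs
    · exact fun h => j_ne_k idx s r h.symm

lemma cA_inj (idx : GZIndex n) (ε : Fin idx.q → Bool) : Function.Injective (cA n idx ε) := by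
  intro r s h
  by_contra hrs
  unfold cA at h
  cases hr : ε r <;> cases hs : ε s <;> rw [hr, hs] at h <;> simp at h
  · exact hrs (idx.jmono.injective h)
  · exact j_ne_k idx r s h
  · exact j_ne_k idx s r h.symm
  · exact hrs (idx.kmono.injective h)

lemma cB_inj (idx : GZIndex n) (ε : Fin idx.q → Bool) : Function.Injective (cB n idx ε) := by
  intro r s h
  by_contra hrs
  unfold cB at h
  cases hr : ε r <;> cases hs : ε s <;> rw [hr, hs] at h <;> simp at h
  · exact hrs (idx.kmono.injective h)
  · exact j_ne_k idx s r h.symm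
  · exact j_ne_k idx r s h
  · exact hrs (idx.jmono.injective h)

lemma disjoint_i_cA (idx : GZIndex n) (ε : Fin idx.q → Bool) :
    Disjoint (Finset.univ.image idx.i) (Finset.univ.image (cA n idx ε)) := by
  rw [Finset.disjoint_left]
  rintro x hx hx'
  simp only [Finset.mem_image, Finset.mem_univ, true_and] at hx hx'
  obtain ⟨r, rfl⟩ := hx
  obtain ⟨s, hs⟩ := hx'
  exact i_ne_cA idx ε r s hs.symm

lemma disjoint_i_cB (idx : GZIndex n) (ε : Fin idx.q → Bool) :
    Disjoint (Finset.univ.image idx.i) (Finset.univ.image (cB n idx ε)) := by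
  rw [Finset.disjoint_left]
  rintro x hx hx'
  simp only [Finset.mem_image, Finset.mem_univ, true_and] at hx hx'
  obtain ⟨r, rfl⟩ := hx
  obtain ⟨s, hs⟩ := hx'
  exact i_ne_cB idx ε r s hs.symm

lemma card_ASet (idx : GZIndex n) (ε : Fin idx.q → Bool) : (ASet n idx ε).card = n := by
  rw [ASet, Finset.card_union_of_disjoint (disjoint_i_cA idx ε),
    Finset.card_image_of_injective _ idx.imono.injective,
    Finset.card_image_of_injective _ (cA_inj idx ε), Finset.card_univ, Finset.card_univ,
    Fintype.card_fin, Fintype.card_fin, idx.hpq]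

lemma card_BSet (idx : GZIndex n) (ε : Fin idx.q → Bool) : (BSet n idx ε).card = n := by
  rw [BSet, Finset.card_union_of_disjoint (disjoint_i_cB idx ε),
    Finset.card_image_of_injective _ idx.imono.injective,
    Finset.card_image_of_injective _ (cB_inj idx ε), Finset.card_univ, Finset.card_univ,
    Fintype.card_fin, Fintype.card_fin, idx.hpq]

lemma card_SSet (idx : GZIndex n) (ε : Fin idx.q → Bool) : (SSet n idx ε).card = 2 * n := by
  have hd : Disjoint ((ASet n idx ε).image (ai n)) ((BSet n idx ε).image (bi n)) := by
    rw [Finset.disjoint_left]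
    rintro x hx hx'
    simp only [Finset.mem_image] at hx hx'
    obtain ⟨a, _, rfl⟩ := hx
    obtain ⟨b, _, hb⟩ := hx'
    exact ai_ne_bi n a b hb.symm
  rw [SSet, Finset.card_union_of_disjoint hd,
    Finset.card_image_of_injective _ (ai_inj n), Finset.card_image_of_injective _ (bi_inj n),
    card_ASet, card_BSet]
  omega

lemma length_atomsD (x y : Fin (2 * n)) (b : Bool) : (atomsD n x y b).length = 2 := by
  cases b <;> rfl

lemma length_aList (idx : GZIndex n) (ε : Fin idx.q → Bool) :
    (aList n idx ε).length = 2 * n := by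
  rw [aList, List.length_append, List.length_flatten, List.length_flatten,
    List.map_ofFn, List.map_ofFn]
  have h1 : (List.length ∘ fun r => atomsP n (idx.i r)) = fun _ : Fin idx.p => 2 := rfl
  have h2 : (List.length ∘ fun r => atomsD n (idx.j r) (idx.k r) (ε r)) =
      fun _ : Fin idx.q => 2 := by
    funext r
    exact length_atomsD _ _ _
  rw [h1, h2, List.sum_ofFn, List.sum_ofFn]
  simp only [Finset.sum_const, Finset.card_univ, Fintype.card_fin, smul_eq_mul]
  have := idx.hpq
  omega

lemma mem_SSet_iff (idx : GZIndex n) (ε : Fin idx.q → Bool) (t : Fin (4 * n)) :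
    t ∈ SSet n idx ε ↔ (∃ x ∈ ASet n idx ε, ai n x = t) ∨ (∃ x ∈ BSet n idx ε, bi n x = t) := by
  simp [SSet, Finset.mem_union, Finset.mem_image]

lemma mem_aList_iff (idx : GZIndex n) (ε : Fin idx.q → Bool) (x : Fin (4 * n) × Bool) :
    x ∈ aList n idx ε ↔ (∃ r, x ∈ atomsP n (idx.i r)) ∨
      (∃ r, x ∈ atomsD n (idx.j r) (idx.k r) (ε r)) := by
  rw [aList, List.mem_append, List.mem_flatten, List.mem_flatten]
  constructor
  · rintro (⟨l, hl, hxl⟩ | ⟨l, hl, hxl⟩) <;>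
      obtain ⟨r, rfl⟩ := List.mem_ofFn.mp hl
    · exact Or.inl ⟨r, hxl⟩
    · exact Or.inr ⟨r, hxl⟩
  · rintro (⟨r, hr⟩ | ⟨r, hr⟩)
    · exact Or.inl ⟨_, List.mem_ofFn.mpr ⟨r, rfl⟩, hr⟩
    · exact Or.inr ⟨_, List.mem_ofFn.mpr ⟨r, rfl⟩, hr⟩

lemma mem_image_univ {m : ℕ} {γ : Type*} [DecidableEq γ] (f : Fin m → γ) (r : Fin m) :
    f r ∈ Finset.univ.image f :=
  Finset.mem_image_of_mem _ (Finset.mem_univ r)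

lemma fst_mem_SSet (idx : GZIndex n) (ε : Fin idx.q → Bool) :
    ∀ x ∈ aList n idx ε, x.1 ∈ SSet n idx ε := by
  intro x hx
  rw [mem_aList_iff] at hx
  rw [mem_SSet_iff]
  rcases hx with ⟨r, hr⟩ | ⟨r, hr⟩
  · simp only [atomsP, List.mem_cons, List.not_mem_nil, or_false] at hr
    rcases hr with rfl | rfl
    · exact Or.inl ⟨idx.i r, Finset.mem_union_left _ (mem_image_univ _ r), rfl⟩
    · exact Or.inr ⟨idx.i r, Finset.mem_union_left _ (mem_image_univ _ r), rfl⟩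
  · cases hb : ε r <;>
      simp only [atomsD, hb, cond_false, cond_true, List.mem_cons, List.not_mem_nil,
        or_false] at hr <;> rcases hr with rfl | rfl
    · refine Or.inl ⟨cA n idx ε r, Finset.mem_union_right _ (mem_image_univ _ r), ?_⟩
      simp [cA, hb]
    · refine Or.inr ⟨cB n idx ε r, Finset.mem_union_right _ (mem_image_univ _ r), ?_⟩
      simp [cB, hb]
    · refine Or.inr ⟨cB n idx ε r, Finset.mem_union_right _ (mem_image_univ _ r), ?_⟩
      simp [cB, hb]
    · refine Or.inl ⟨cA n idx ε r, Finset.mem_union_right _ (mem_image_univ _ r), ?_⟩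
      simp [cA, hb]

lemma SSet_mem_fst (idx : GZIndex n) (ε : Fin idx.q → Bool) :
    ∀ t ∈ SSet n idx ε, ∃ x ∈ aList n idx ε, x.1 = t := by
  intro t ht
  rw [mem_SSet_iff] at ht
  rcases ht with ⟨x, hx, rfl⟩ | ⟨x, hx, rfl⟩
  · rw [ASet, Finset.mem_union] at hx
    rcases hx with hx | hx <;> simp only [Finset.mem_image, Finset.mem_univ, true_and] at hx <;>
      obtain ⟨r, rfl⟩ := hx
    · refine ⟨(ai n (idx.i r), false), ?_, rfl⟩
      rw [mem_aList_iff]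
      exact Or.inl ⟨r, by simp [atomsP]⟩
    · cases hb : ε r
      · refine ⟨(ai n (idx.j r), false), ?_, by simp [cA, hb]⟩
        rw [mem_aList_iff]
        exact Or.inr ⟨r, by simp [atomsD, hb]⟩
      · refine ⟨(ai n (idx.k r), false), ?_, by simp [cA, hb]⟩
        rw [mem_aList_iff]
        exact Or.inr ⟨r, by simp [atomsD, hb]⟩
  · rw [BSet, Finset.mem_union] at hx
    rcases hx with hx | hx <;> simp only [Finset.mem_image, Finset.mem_univ, true_and] at hx <;>
      obtain ⟨r, rfl⟩ := hx
    · refine ⟨(bi n (idx.i r), false), ?_, rfl⟩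
      rw [mem_aList_iff]
      exact Or.inl ⟨r, by simp [atomsP]⟩
    · cases hb : ε r
      · refine ⟨(bi n (idx.k r), false), ?_, by simp [cB, hb]⟩
        rw [mem_aList_iff]
        exact Or.inr ⟨r, by simp [atomsD, hb]⟩
      · refine ⟨(bi n (idx.j r), true), ?_, by simp [cB, hb]⟩
        rw [mem_aList_iff]
        exact Or.inr ⟨r, by simp [atomsD, hb]⟩

lemma snd_false_of_mem (idx : GZIndex n) :
    ∀ x ∈ aList n idx (fun _ => false), x.2 = false := by
  intro x hx
  rw [mem_aList_iff] at hx
  rcases hx with ⟨r, hr⟩ | ⟨r, hr⟩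
  · simp only [atomsP, List.mem_cons, List.not_mem_nil, or_false] at hr
    rcases hr with rfl | rfl <;> rfl
  · simp only [atomsD, cond_false, List.mem_cons, List.not_mem_nil, or_false] at hr
    rcases hr with rfl | rfl <;> rfl

def w (idx : GZIndex n) : ℕ := (∑ r, (idx.i r : ℕ)) + ∑ r, (idx.j r : ℕ)

lemma sum_ASet (idx : GZIndex n) (ε : Fin idx.q → Bool) :
    ∑ x ∈ ASet n idx ε, (x : ℕ) = (∑ r, (idx.i r : ℕ)) + ∑ r, (cA n idx ε r : ℕ) := by
  rw [ASet, Finset.sum_union (disjoint_i_cA idx ε),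
    Finset.sum_image (fun a _ b _ h => idx.imono.injective h),
    Finset.sum_image (fun a _ b _ h => cA_inj idx ε h)]

lemma j_le_cA (idx : GZIndex n) (ε : Fin idx.q → Bool) (r : Fin idx.q) :
    (idx.j r : ℕ) ≤ (cA n idx ε r : ℕ) := by
  unfold cA
  cases ε r
  · exact le_refl _
  · exact (idx.hjk r).le

lemma w_le_sum_ASet (idx : GZIndex n) (ε : Fin idx.q → Bool) :
    w idx ≤ ∑ x ∈ ASet n idx ε, (x : ℕ) := by
  rw [sum_ASet, w]
  exact Nat.add_le_add_left (Finset.sum_le_sum fun r _ => j_le_cA idx ε r) _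

lemma inter_AB (idx : GZIndex n) (ε : Fin idx.q → Bool) :
    ASet n idx ε ∩ BSet n idx ε = Finset.univ.image idx.i := by
  ext x
  simp only [ASet, BSet, Finset.mem_inter, Finset.mem_union, Finset.mem_image, Finset.mem_univ,
    true_and]
  constructor
  · rintro ⟨hA | ⟨r, hr⟩, hB⟩
    · exact hA
    · rcases hB with hB | ⟨s, hs⟩
      · exact hB
      · exact absurd (hr.trans hs.symm) (cA_ne_cB idx ε r s)
  · rintro ⟨r, rfl⟩
    exact ⟨Or.inl ⟨r, rfl⟩, Or.inl ⟨r, rfl⟩⟩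

lemma sdiff_ASet (idx : GZIndex n) (ε : Fin idx.q → Bool) :
    ASet n idx ε \ Finset.univ.image idx.i = Finset.univ.image (cA n idx ε) :=
  Finset.union_sdiff_cancel_left (disjoint_i_cA idx ε)

lemma sdiff_BSet (idx : GZIndex n) (ε : Fin idx.q → Bool) :
    BSet n idx ε \ Finset.univ.image idx.i = Finset.univ.image (cB n idx ε) :=
  Finset.union_sdiff_cancel_left (disjoint_i_cB idx ε)

lemma SSet_split {X Y X' Y' : Finset (Fin (2 * n))}
    (h : X.image (ai n) ∪ Y.image (bi n) = X'.image (ai n) ∪ Y'.image (bi n)) :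
    X = X' ∧ Y = Y' := by
  constructor
  · ext x
    constructor
    · intro hx
      have : ai n x ∈ X'.image (ai n) ∪ Y'.image (bi n) := by
        rw [← h]
        exact Finset.mem_union_left _ (Finset.mem_image_of_mem _ hx)
      rcases Finset.mem_union.mp this with h' | h'
      · obtain ⟨y, hy, hxy⟩ := Finset.mem_image.mp h'
        exact ai_inj n hxy ▸ hy
      · obtain ⟨y, _, hxy⟩ := Finset.mem_image.mp h'
        exact absurd hxy.symm (ai_ne_bi n x y)
    · intro hx
      have : ai n x ∈ X.image (ai n) ∪ Y.image (bi n) := by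
        rw [h]
        exact Finset.mem_union_left _ (Finset.mem_image_of_mem _ hx)
      rcases Finset.mem_union.mp this with h' | h'
      · obtain ⟨y, hy, hxy⟩ := Finset.mem_image.mp h'
        exact ai_inj n hxy ▸ hy
      · obtain ⟨y, _, hxy⟩ := Finset.mem_image.mp h'
        exact absurd hxy.symm (ai_ne_bi n x y)
  · ext x
    constructor
    · intro hx
      have : bi n x ∈ X'.image (ai n) ∪ Y'.image (bi n) := by
        rw [← h]
        exact Finset.mem_union_right _ (Finset.mem_image_of_mem _ hx)
      rcases Finset.mem_union.mp this with h' | h'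
      · obtain ⟨y, _, hxy⟩ := Finset.mem_image.mp h'
        exact absurd hxy (ai_ne_bi n y x)
      · obtain ⟨y, hy, hxy⟩ := Finset.mem_image.mp h'
        exact bi_inj n hxy ▸ hy
    · intro hx
      have : bi n x ∈ X.image (ai n) ∪ Y.image (bi n) := by
        rw [h]
        exact Finset.mem_union_right _ (Finset.mem_image_of_mem _ hx)
      rcases Finset.mem_union.mp this with h' | h'
      · obtain ⟨y, _, hxy⟩ := Finset.mem_image.mp h'
        exact absurd hxy (ai_ne_bi n y x)
      · obtain ⟨y, hy, hxy⟩ := Finset.mem_image.mp h'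
        exact bi_inj n hxy ▸ hy

lemma strictMono_eq {p : ℕ} {f g : Fin p → Fin (2 * n)} (hf : StrictMono f) (hg : StrictMono g)
    (h : Finset.univ.image f = Finset.univ.image g) : f = g := by
  have hc : (Finset.univ.image f).card = p := by
    rw [Finset.card_image_of_injective _ hf.injective, Finset.card_univ, Fintype.card_fin]
  have hc2 : (Finset.univ.image g).card = p := by
    rw [← h]; exact hc
  have h1 := Finset.orderEmbOfFin_unique hc
    (fun x => Finset.mem_image_of_mem f (Finset.mem_univ x)) hf
  have h2 := Finset.orderEmbOfFin_unique hc
    (fun x => by rw [h]; exact Finset.mem_image_of_mem g (Finset.mem_univ x)) hg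
  exact h1.trans h2.symm

lemma gz_ext {idx idx' : GZIndex n}
    (hI : Finset.univ.image idx.i = Finset.univ.image idx'.i)
    (hJ : Finset.univ.image idx.j = Finset.univ.image idx'.j)
    (hK : Finset.univ.image idx.k = Finset.univ.image idx'.k) : idx = idx' := by
  obtain ⟨p, q, hpq, i, j, k, im, jm, km, hjk, hd⟩ := idx
  obtain ⟨p', q', hpq', i', j', k', im', jm', km', hjk', hd'⟩ := idx'
  simp only at hI hJ hK
  have hp : p = p' := by
    have := congrArg Finset.card hI
    rwa [Finset.card_image_of_injective _ im.injective,
      Finset.card_image_of_injective _ im'.injective, Finset.card_univ, Finset.card_univ,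
      Fintype.card_fin, Fintype.card_fin] at this
  subst hp
  have hq : q = q' := by omega
  subst hq
  simp only [GZIndex.mk.injEq, heq_eq_eq, true_and]
  exact ⟨strictMono_eq im im' hI, strictMono_eq jm jm' hJ, strictMono_eq km km' hK⟩

/-! ### Determinant terms -/

variable (n)

noncomputable def dmat (idx : GZIndex n) (ε : Fin idx.q → Bool) (T : Fin (2 * n) → Fin (4 * n)) :
    Matrix (Fin (2 * n)) (Fin (2 * n)) ℚ :=
  Matrix.of fun r c =>
    toVec n ((aList n idx ε).get (Fin.cast (length_aList idx ε).symm r)) (T c)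

lemma lam_gz (idx : GZIndex n) (T : Fin (2 * n) → Fin (4 * n)) :
    lam n T (gzMonomial n idx) = ∑ ε : Fin idx.q → Bool, (dmat n idx ε T).det := by
  rw [gz_expand, map_sum]
  apply Finset.sum_congr rfl
  intro ε _
  have h1 : (aList n idx ε).map (⇑(ι ℚ) ∘ toVec n) =
      ((aList n idx ε).map (toVec n)).map (ι ℚ) := by rw [List.map_map]
  rw [h1, lam_list n T _ (by rw [List.length_map, length_aList])]
  congr 1
  ext r c
  simp only [dmat, Matrix.of_apply, List.get_eq_getElem, List.getElem_map, Fin.coe_cast]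

lemma toVec_eq_zero (x : Fin (4 * n) × Bool) (t : Fin (4 * n)) (h : x.1 ≠ t) :
    toVec n x t = 0 := by
  rw [toVec]
  cases x.2
  · exact Pi.single_eq_of_ne (Ne.symm h) 1
  · simp only [cond_true, Pi.neg_apply, Pi.single_eq_of_ne (Ne.symm h) 1, neg_zero]

lemma mem_of_det_ne_zero {idx : GZIndex n} {ε : Fin idx.q → Bool}
    {T : Fin (2 * n) → Fin (4 * n)} (h : (dmat n idx ε T).det ≠ 0) :
    ∀ c, T c ∈ SSet n idx ε := by
  intro c
  by_contra hc
  apply h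
  apply Matrix.det_eq_zero_of_column_eq_zero c
  intro r
  apply toVec_eq_zero
  intro heq
  exact hc (heq ▸ fst_mem_SSet idx ε _ (List.get_mem _ _))

variable {n}

lemma cA_false (idx : GZIndex n) : cA n idx (fun _ => false) = idx.j := rfl

lemma cB_false (idx : GZIndex n) : cB n idx (fun _ => false) = idx.k := rfl

lemma key_lemma (idx0 idx : GZIndex n) (hw : w idx0 ≤ w idx) (ε : Fin idx.q → Bool)
    (hS : SSet n idx0 (fun _ => false) ⊆ SSet n idx ε) :
    idx = idx0 ∧ ε = fun _ => false := by
  have hSeq : SSet n idx ε = SSet n idx0 (fun _ => false) :=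
    (Finset.eq_of_subset_of_card_le hS (by rw [card_SSet, card_SSet])).symm
  rw [SSet, SSet] at hSeq
  obtain ⟨hA, hB⟩ := SSet_split hSeq
  have hI : Finset.univ.image idx.i = Finset.univ.image idx0.i := by
    rw [← inter_AB idx ε, ← inter_AB idx0 (fun _ => false), hA, hB]
  -- sums
  have e1 : ∑ x ∈ ASet n idx ε, (x : ℕ) = (∑ r, (idx.i r : ℕ)) + ∑ r, (cA n idx ε r : ℕ) :=
    sum_ASet idx ε
  have e0 : ∑ x ∈ ASet n idx0 (fun _ => false), (x : ℕ) = w idx0 := by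
    rw [sum_ASet, w, cA_false]
  have e2 : ∑ x ∈ ASet n idx ε, (x : ℕ) = w idx0 := by rw [hA, e0]
  have hwidx : w idx = (∑ r, (idx.i r : ℕ)) + ∑ r, (idx.j r : ℕ) := rfl
  have hle : ∑ r, (idx.j r : ℕ) ≤ ∑ r, (cA n idx ε r : ℕ) :=
    Finset.sum_le_sum fun r _ => j_le_cA idx ε r
  have heq : ∑ r, (cA n idx ε r : ℕ) = ∑ r, (idx.j r : ℕ) := by omega
  have hεf : ε = fun _ => false := by
    funext r
    by_contra hr
    simp only [Bool.not_eq_false] at hr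
    have hstrict : (idx.j r : ℕ) < (cA n idx ε r : ℕ) := by
      rw [cA, hr, cond_true]
      exact idx.hjk r
    have : ∑ r, (idx.j r : ℕ) < ∑ r, (cA n idx ε r : ℕ) :=
      Finset.sum_lt_sum (fun s _ => j_le_cA idx ε s) ⟨r, Finset.mem_univ r, hstrict⟩
    omega
  subst hεf
  refine ⟨?_, rfl⟩
  have hJ : Finset.univ.image idx.j = Finset.univ.image idx0.j := by
    rw [← cA_false idx, ← cA_false idx0, ← sdiff_ASet idx _, ← sdiff_ASet idx0 _, hA, hI]
  have hK : Finset.univ.image idx.k = Finset.univ.image idx0.k := by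
    rw [← cB_false idx, ← cB_false idx0, ← sdiff_BSet idx _, ← sdiff_BSet idx0 _, hB, hI]
  exact gz_ext hI hJ hK

noncomputable def T0 (idx0 : GZIndex n) : Fin (2 * n) → Fin (4 * n) :=
  fun c => (SSet n idx0 (fun _ => false)).orderEmbOfFin (card_SSet idx0 (fun _ => false)) c

lemma T0_mem (idx0 : GZIndex n) (c : Fin (2 * n)) :
    T0 idx0 c ∈ SSet n idx0 (fun _ => false) :=
  Finset.orderEmbOfFin_mem _ _ c

lemma T0_inj (idx0 : GZIndex n) : Function.Injective (T0 idx0) :=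
  fun a b h => ((SSet n idx0 (fun _ => false)).orderEmbOfFin
    (card_SSet idx0 (fun _ => false))).injective h

lemma range_T0 (idx0 : GZIndex n) :
    Set.range (T0 idx0) = ↑(SSet n idx0 (fun _ => false)) :=
  Finset.range_orderEmbOfFin _ _

lemma leading_det_ne_zero (idx0 : GZIndex n) :
    (dmat n idx0 (fun _ => false) (T0 idx0)).det ≠ 0 := by
  have hlen : (aList n idx0 (fun _ => false)).length = 2 * n := length_aList idx0 _
  set l := aList n idx0 (fun _ => false) with hldef
  set s0 : Fin (2 * n) → Fin (4 * n) := fun r => (l.get (Fin.cast hlen.symm r)).1 with hs0def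
  have hfst : (l.map Prod.fst).toFinset = SSet n idx0 (fun _ => false) := by
    ext t
    simp only [List.mem_toFinset, List.mem_map]
    constructor
    · rintro ⟨x, hx, rfl⟩
      exact fst_mem_SSet idx0 _ x hx
    · intro ht
      obtain ⟨x, hx, hxt⟩ := SSet_mem_fst idx0 _ t ht
      exact ⟨x, hx, hxt⟩
  have hlenf : (l.map Prod.fst).length = 2 * n := by rw [List.length_map, hlen]
  have hnd : (l.map Prod.fst).Nodup := by
    have hc := congrArg Finset.card hfst
    rw [List.card_toFinset, card_SSet] at hc
    have hded : (l.map Prod.fst).dedup = l.map Prod.fst :=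
      (List.dedup_sublist _).eq_of_length (by rw [hc, hlenf])
    rw [← hded]
    exact List.nodup_dedup _
  have hs0get : ∀ r : Fin (2 * n), s0 r = (l.map Prod.fst).get (Fin.cast hlenf.symm r) := by
    intro r
    simp only [hs0def, List.get_eq_getElem, List.getElem_map, Fin.coe_cast]
  have hs0inj : Function.Injective s0 := by
    intro r r' h
    rw [hs0get, hs0get] at h
    have := List.nodup_iff_injective_get.mp hnd h
    have := congrArg Fin.val this
    exact Fin.ext this
  have hrange : Set.range s0 = Set.range (T0 idx0) := by
    rw [range_T0]
    ext t
    simp only [Set.mem_range, Finset.mem_coe]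
    constructor
    · rintro ⟨r, rfl⟩
      exact fst_mem_SSet idx0 _ _ (List.get_mem _ _)
    · intro ht
      obtain ⟨x, hx, rfl⟩ := SSet_mem_fst idx0 _ t ht
      obtain ⟨m, hm, rfl⟩ := List.mem_iff_getElem.mp hx
      have hm2 : m < 2 * n := by rw [← hlen]; exact hm
      refine ⟨⟨m, hm2⟩, ?_⟩
      simp only [hs0def, List.get_eq_getElem, Fin.coe_cast]
      rfl
  have hentry : ∀ r c, dmat n idx0 (fun _ => false) (T0 idx0) r c =
      if T0 idx0 c = s0 r then 1 else 0 := by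
    intro r c
    have hx : l.get (Fin.cast hlen.symm r) ∈ l := List.get_mem _ _
    have h2 : (l.get (Fin.cast hlen.symm r)).2 = false := snd_false_of_mem idx0 _ hx
    show toVec n (l.get (Fin.cast hlen.symm r)) (T0 idx0 c) = _
    rw [toVec, h2, cond_false, Pi.single_apply]
  let π : Equiv.Perm (Fin (2 * n)) :=
    (Equiv.ofInjective s0 hs0inj).trans
      ((Equiv.setCongr hrange).trans (Equiv.ofInjective _ (T0_inj idx0)).symm)
  have hπ : ∀ r, T0 idx0 (π r) = s0 r := by
    intro r
    exact Equiv.apply_ofInjective_symm (T0_inj idx0)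
      ((Equiv.setCongr hrange) ((Equiv.ofInjective s0 hs0inj) r))
  have hmat : dmat n idx0 (fun _ => false) (T0 idx0) =
      (1 : Matrix (Fin (2 * n)) (Fin (2 * n)) ℚ).submatrix π id := by
    ext r c
    rw [hentry, Matrix.submatrix_apply, id_eq, Matrix.one_apply, ← hπ r]
    simp only [(T0_inj idx0).eq_iff]
    exact if_congr eq_comm rfl rfl
  rw [hmat, Matrix.det_permute, Matrix.det_one, mul_one]
  rcases Int.units_eq_one_or (Equiv.Perm.sign π) with h | h <;> rw [h] <;> norm_num

end GZAux

/-- The family of Gelfand–Zetlin monomials is linearly independent over `ℚ`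
(the realization statement underlying the direct sum `LZⁿ(E^{2n}, 0) = S ⊕ T`, Lemma 3.4). -/
theorem gzMonomial_linearIndependent (n : ℕ) (hn : 0 < n) :
    LinearIndependent ℚ (gzMonomial n) := by
  classical
  rw [linearIndependent_iff']
  intro s g hsum t ht
  by_contra hgt
  set s' := s.filter (fun idx => g idx ≠ 0) with hs'
  have hne : s'.Nonempty := ⟨t, Finset.mem_filter.mpr ⟨ht, hgt⟩⟩
  obtain ⟨idx0, hidx0, hmin⟩ := Finset.exists_min_image s' GZAux.w hne
  have hg0 : g idx0 ≠ 0 := (Finset.mem_filter.mp hidx0).2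
  have happ := congrArg (GZAux.lam n (GZAux.T0 idx0)) hsum
  rw [map_sum, map_zero] at happ
  simp only [map_smul, smul_eq_mul] at happ
  have hterm : ∀ idx ∈ s, idx ≠ idx0 →
      g idx * GZAux.lam n (GZAux.T0 idx0) (gzMonomial n idx) = 0 := by
    intro idx hidxs hne0
    by_cases hg : g idx = 0
    · rw [hg, zero_mul]
    · have hwle : GZAux.w idx0 ≤ GZAux.w idx := hmin idx (Finset.mem_filter.mpr ⟨hidxs, hg⟩)
      rw [GZAux.lam_gz, Finset.sum_eq_zero, mul_zero]
      intro ε _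
      by_contra hd
      have hS : GZAux.SSet n idx0 (fun _ => false) ⊆ GZAux.SSet n idx ε := by
        intro x hx
        have hx2 : x ∈ Set.range (GZAux.T0 idx0) := by
          rw [GZAux.range_T0]
          exact hx
        obtain ⟨c, rfl⟩ := hx2
        exact GZAux.mem_of_det_ne_zero n hd c
      exact hne0 (GZAux.key_lemma idx0 idx hwle ε hS).1
  rw [Finset.sum_eq_single_of_mem idx0 (Finset.filter_subset _ s hidx0) hterm] at happ
  have hc0 : GZAux.lam n (GZAux.T0 idx0) (gzMonomial n idx0) ≠ 0 := by
    rw [GZAux.lam_gz]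
    rw [Finset.sum_eq_single_of_mem (fun _ => false) (Finset.mem_univ _) ?_]
    · exact GZAux.leading_det_ne_zero idx0
    · intro ε _ hεne
      by_contra hd
      have hS : GZAux.SSet n idx0 (fun _ => false) ⊆ GZAux.SSet n idx0 ε := by
        intro x hx
        have hx2 : x ∈ Set.range (GZAux.T0 idx0) := by
          rw [GZAux.range_T0]
          exact hx
        obtain ⟨c, rfl⟩ := hx2
        exact GZAux.mem_of_det_ne_zero n hd c
      exact hεne (GZAux.key_lemma idx0 idx0 le_rfl ε hS).2
  exact hg0 ((mul_eq_zero.mp happ).resolve_right hc0)
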